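/- Let S be a commutative semiring in which every ideal is subtractive. Then the Dedekind–Mertens content formula holds in the polynomial semiring S[X]: for all f, g ∈ S[X] there exists m ∈ ℕ such that c(f)^{m+1} c(g) = c(f)^m c(fg). -/

import Mathlib

/-- The content of a polynomial `f ∈ S[X]`: the ideal of `S` generated by the
coefficients of `f`. -/
noncomputable def polyContent {S : Type*} [CommSemiring S] (f : Polynomial S) : Ideal S :=
  Ideal.span (Set.range f.coeff)

namespace DMaux

open Polynomial

variable {S : Type*} [CommSemiring S]

lemma coeff_mem (f : S[X]) (i : ℕ) : f.coeff i ∈ polyContent f :=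
  Ideal.subset_span ⟨i, rfl⟩

lemma content_mul_le (f g : S[X]) :
    polyContent (f * g) ≤ polyContent f * polyContent g := by
  rw [polyContent, Ideal.span_le]
  rintro x ⟨k, rfl⟩
  rw [coeff_mul]
  exact Ideal.sum_mem _ fun c _ => Ideal.mul_mem_mul (coeff_mem f c.1) (coeff_mem g c.2)

lemma mem_pow_mul {I K : Ideal S} {x y : S} {s t : ℕ}
    (hx : x ∈ I ^ s) (hy : y ∈ I ^ t * K) : x * y ∈ I ^ (s + t) * K := by
  rw [pow_add, mul_assoc]
  exact Ideal.mul_mem_mul hx hy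

/-- Key lemma: powers of a top coefficient of `f` move coefficients of `g`
into (powers of the content of `f` times) the content of `f*g`. -/
lemma lemA (hsub : ∀ I : Ideal S, ∀ a b : S, a + b ∈ I → a ∈ I → b ∈ I)
    (f g : S[X]) (d n : ℕ)
    (hf : ∀ i, d < i → f.coeff i = 0) (hg : ∀ j, n < j → g.coeff j = 0) :
    ∀ k j, j + k = n →
      (f.coeff d) ^ (k + 1) * g.coeff j ∈ polyContent f ^ k * polyContent (f * g) := by
  intro k
  induction k using Nat.strong_induction_on with
  | _ k IH =>
    intro j hjk
    have hmem : (d, j) ∈ Finset.HasAntidiagonal.antidiagonal (d + j) := Finset.HasAntidiagonal.mem_antidiagonal.mpr rfl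
    have hsplit : (f.coeff d) ^ k * (f * g).coeff (d + j)
        = (f.coeff d) ^ (k + 1) * g.coeff j +
          ∑ x ∈ (Finset.HasAntidiagonal.antidiagonal (d + j)).erase (d, j),
            (f.coeff d) ^ k * (f.coeff x.1 * g.coeff x.2) := by
      rw [coeff_mul, Finset.mul_sum, ← Finset.add_sum_erase _ _ hmem]
      congr 1
      ring
    have hrest : ∑ x ∈ (Finset.HasAntidiagonal.antidiagonal (d + j)).erase (d, j),
        (f.coeff d) ^ k * (f.coeff x.1 * g.coeff x.2)
          ∈ polyContent f ^ k * polyContent (f * g) := by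
      refine Ideal.sum_mem _ fun x hx => ?_
      obtain ⟨hne, hadx⟩ := Finset.mem_erase.mp hx
      have hadd : x.1 + x.2 = d + j := Finset.HasAntidiagonal.mem_antidiagonal.mp hadx
      by_cases h1 : d < x.1
      · rw [hf x.1 h1, zero_mul, mul_zero]; exact zero_mem _
      · push_neg at h1
        by_cases h2 : n < x.2
        · rw [hg x.2 h2, mul_zero, mul_zero]; exact zero_mem _
        · push_neg at h2
          have hx1 : x.1 < d := by
            rcases lt_or_eq_of_le h1 with h | h
            · exact h
            · exfalso
              apply hne
              have h22 : x.2 = j := by omega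
              exact Prod.ext h h22
          have ht1 : 1 ≤ d - x.1 := by omega
          have htk : d - x.1 ≤ k := by omega
          have hjk' : x.2 + (k - (d - x.1)) = n := by omega
          have hIH : (f.coeff d) ^ ((k - (d - x.1)) + 1) * g.coeff x.2
              ∈ polyContent f ^ (k - (d - x.1)) * polyContent (f * g) :=
            IH (k - (d - x.1)) (by omega) x.2 hjk'
          have e1 : (f.coeff d) ^ (d - x.1 - 1) *
              ((f.coeff d) ^ ((k - (d - x.1)) + 1) * g.coeff x.2)
              ∈ polyContent f ^ ((d - x.1 - 1) + (k - (d - x.1))) * polyContent (f * g) :=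
            mem_pow_mul (Ideal.pow_mem_pow (coeff_mem f d) _) hIH
          have e2 : f.coeff x.1 * ((f.coeff d) ^ (d - x.1 - 1) *
              ((f.coeff d) ^ ((k - (d - x.1)) + 1) * g.coeff x.2))
              ∈ polyContent f ^ (1 + ((d - x.1 - 1) + (k - (d - x.1)))) * polyContent (f * g) :=
            mem_pow_mul (by rw [pow_one]; exact coeff_mem f x.1) e1
          have hexp : 1 + ((d - x.1 - 1) + (k - (d - x.1))) = k := by omega
          have heq : (f.coeff d) ^ k * (f.coeff x.1 * g.coeff x.2)
              = f.coeff x.1 * ((f.coeff d) ^ (d - x.1 - 1) *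
                ((f.coeff d) ^ ((k - (d - x.1)) + 1) * g.coeff x.2)) := by
            have hexp2 : (d - x.1 - 1) + ((k - (d - x.1)) + 1) = k := by omega
            have hpow : (f.coeff d : S) ^ k =
                f.coeff d ^ (d - x.1 - 1) * f.coeff d ^ ((k - (d - x.1)) + 1) := by
              rw [← pow_add, hexp2]
            rw [hpow]
            ring
          rw [hexp] at e2
          rw [heq]
          exact e2
    have hLHS : (f.coeff d) ^ k * (f * g).coeff (d + j)
        ∈ polyContent f ^ k * polyContent (f * g) :=
      Ideal.mul_mem_mul (Ideal.pow_mem_pow (coeff_mem f d) k) (coeff_mem (f * g) (d + j))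
    rw [hsplit] at hLHS
    rw [add_comm] at hLHS
    exact hsub _ _ _ hLHS hrest

lemma lemA' (hsub : ∀ I : Ideal S, ∀ a b : S, a + b ∈ I → a ∈ I → b ∈ I)
    (f g : S[X]) (d n : ℕ)
    (hf : ∀ i, d < i → f.coeff i = 0) (hg : ∀ j, n < j → g.coeff j = 0) :
    ∀ x ∈ polyContent g,
      (f.coeff d) ^ (n + 1) * x ∈ polyContent f ^ n * polyContent (f * g) := by
  intro x hx
  have hx' : x ∈ Submodule.span S (Set.range g.coeff) := hx
  clear hx
  induction hx' using Submodule.span_induction with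
  | mem x h =>
    obtain ⟨j, rfl⟩ := h
    by_cases hj : n < j
    · rw [hg j hj, mul_zero]; exact zero_mem _
    · push_neg at hj
      have h1 := lemA hsub f g d n hf hg (n - j) j (by omega)
      have h2 : (f.coeff d) ^ (n - (n - j)) * ((f.coeff d) ^ ((n - j) + 1) * g.coeff j)
          ∈ polyContent f ^ ((n - (n - j)) + (n - j)) * polyContent (f * g) :=
        mem_pow_mul (Ideal.pow_mem_pow (coeff_mem f d) _) h1
      have e1 : (n - (n - j)) + (n - j) = n := by omega
      have e2 : (f.coeff d) ^ (n - (n - j)) * ((f.coeff d) ^ ((n - j) + 1) * g.coeff j)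
          = (f.coeff d) ^ (n + 1) * g.coeff j := by
        rw [← mul_assoc, ← pow_add]
        congr 2
        omega
      rw [e1, e2] at h2
      exact h2
  | zero => rw [mul_zero]; exact zero_mem _
  | add x y hx1 hy1 ihx ihy => rw [mul_add]; exact add_mem ihx ihy
  | smul s x hx1 ih =>
    rw [smul_eq_mul, mul_left_comm]
    exact Ideal.mul_mem_left _ _ ih

lemma lemH (A B T : Ideal S) :
    ∀ s i (C : Ideal S), (∀ i' t, i' + t = i + s → A ^ i' * (B ^ t * C) ≤ T) →
      A ^ i * ((A + B) ^ s * C) ≤ T := by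
  intro s
  induction s with
  | zero =>
    intro i C h
    have := h i 0 (by omega)
    simp only [pow_zero, one_mul] at this ⊢
    exact this
  | succ s IHs =>
    intro i C h
    have hdist : (A + B) ^ (s + 1) * C = A * ((A + B) ^ s * C) + B * ((A + B) ^ s * C) := by
      ring
    rw [hdist, mul_add]
    have h1 : A ^ i * (A * ((A + B) ^ s * C)) ≤ T := by
      have he : A ^ i * (A * ((A + B) ^ s * C)) = A ^ (i + 1) * ((A + B) ^ s * C) := by ring
      rw [he]
      exact IHs (i + 1) C (fun i' t hit => h i' t (by omega))
    have h2 : A ^ i * (B * ((A + B) ^ s * C)) ≤ T := by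
      have he : A ^ i * (B * ((A + B) ^ s * C)) = A ^ i * ((A + B) ^ s * (B * C)) := by ring
      rw [he]
      refine IHs i (B * C) (fun i' t hit => ?_)
      have he2 : A ^ i' * (B ^ t * (B * C)) = A ^ i' * (B ^ (t + 1) * C) := by ring
      rw [he2]
      exact h i' (t + 1) (by omega)
    rw [Submodule.add_eq_sup]
    exact sup_le h1 h2

lemma mainle (hsub : ∀ I : Ideal S, ∀ a b : S, a + b ∈ I → a ∈ I → b ∈ I) :
    ∀ d (f : S[X]), (∀ i, d ≤ i → f.coeff i = 0) → ∀ g : S[X], ∃ m : ℕ,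
      polyContent f ^ (m + 1) * polyContent g ≤ polyContent f ^ m * polyContent (f * g) := by
  intro d
  induction d with
  | zero =>
    intro f hf g
    refine ⟨0, ?_⟩
    have hbot : polyContent f = ⊥ := by
      refine le_bot_iff.mp ?_
      rw [polyContent, Ideal.span_le]
      rintro x ⟨i, rfl⟩
      simp [hf i (Nat.zero_le i)]
    rw [hbot]
    simp
  | succ d IH =>
    intro f hf g
    have hf1 : ∀ i, d ≤ i → (f.erase d).coeff i = 0 := by
      intro i hi
      rw [coeff_erase]
      split
      · rfl
      · exact hf i (by omega)
    obtain ⟨m₁, hm₁⟩ := IH (f.erase d) hf1 g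
    have hg : ∀ j, g.natDegree < j → g.coeff j = 0 := fun j hj =>
      coeff_eq_zero_of_natDegree_lt hj
    have hfd : ∀ i, d < i → f.coeff i = 0 := fun i hi => hf i hi
    have ha : f.coeff d ∈ polyContent f := coeff_mem f d
    have hAle : Ideal.span {f.coeff d} ≤ polyContent f :=
      Ideal.span_le.mpr (Set.singleton_subset_iff.mpr ha)
    have hf1le : polyContent (f.erase d) ≤ polyContent f := by
      rw [polyContent, Ideal.span_le]
      rintro x ⟨i, rfl⟩
      rw [coeff_erase]
      split
      · exact zero_mem _
      · exact coeff_mem f i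
    have hfle : polyContent f ≤ Ideal.span {f.coeff d} + polyContent (f.erase d) := by
      rw [polyContent, Ideal.span_le]
      rintro x ⟨i, rfl⟩
      by_cases hi : i = d
      · subst hi
        exact Submodule.mem_sup_left (Ideal.subset_span rfl)
      · have hco : f.coeff i = (f.erase d).coeff i := by rw [coeff_erase, if_neg hi]
        rw [hco]
        exact Submodule.mem_sup_right (coeff_mem (f.erase d) i)
    have hF2 : polyContent (f.erase d * g) ≤
        polyContent (f * g) + Ideal.span {f.coeff d} * polyContent g := by
      rw [polyContent, Ideal.span_le]
      rintro x ⟨κ, rfl⟩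
      have hmon : (Polynomial.monomial d (f.coeff d) * g).coeff κ
          ∈ Ideal.span {f.coeff d} * polyContent g := by
        rw [coeff_mul]
        refine Ideal.sum_mem _ fun y hy => ?_
        rw [coeff_monomial]
        split
        · exact Ideal.mul_mem_mul (Ideal.subset_span rfl) (coeff_mem g y.2)
        · rw [zero_mul]; exact zero_mem _
      have hco : (f * g).coeff κ =
          (Polynomial.monomial d (f.coeff d) * g).coeff κ + (f.erase d * g).coeff κ := by
        conv_lhs => rw [← Polynomial.monomial_add_erase f d]
        rw [add_mul, coeff_add]
      have h1 : (Polynomial.monomial d (f.coeff d) * g).coeff κ + (f.erase d * g).coeff κ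
          ∈ polyContent (f * g) + Ideal.span {f.coeff d} * polyContent g := by
        rw [← hco]
        exact Submodule.mem_sup_left (coeff_mem (f * g) κ)
      exact hsub _ _ _ h1 (Submodule.mem_sup_right hmon)
    have hA' : ∀ x ∈ polyContent g,
        (f.coeff d) ^ (g.natDegree + 1) * x
          ∈ polyContent f ^ g.natDegree * polyContent (f * g) :=
      lemA' hsub f g d g.natDegree hfd hg
    refine ⟨m₁ + g.natDegree + 1, ?_⟩
    set n := g.natDegree with hndef
    set m := m₁ + n + 1 with hmdef
    have hkey : Ideal.span {f.coeff d} ^ (n + 1) * polyContent g ≤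
        polyContent f ^ n * polyContent (f * g) := by
      rw [Ideal.span_singleton_pow]
      refine Ideal.mul_le.mpr fun r hr s hs => ?_
      obtain ⟨u, rfl⟩ := Ideal.mem_span_singleton'.mp hr
      have he : u * (f.coeff d) ^ (n + 1) * s = u * ((f.coeff d) ^ (n + 1) * s) := by ring
      rw [he]
      exact Ideal.mul_mem_left _ u (hA' s hs)
    have hcase1 : ∀ i t, i + t = m + 1 → n + 1 ≤ i →
        Ideal.span {f.coeff d} ^ i * (polyContent (f.erase d) ^ t * polyContent g) ≤
          polyContent f ^ m * polyContent (f * g) := by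
      intro i t hit hin
      obtain ⟨i', rfl⟩ : ∃ i', i = i' + (n + 1) := ⟨i - (n + 1), by omega⟩
      have hexp : i' + t + n = m := by omega
      calc Ideal.span {f.coeff d} ^ (i' + (n + 1)) *
            (polyContent (f.erase d) ^ t * polyContent g)
          = Ideal.span {f.coeff d} ^ i' * polyContent (f.erase d) ^ t *
              (Ideal.span {f.coeff d} ^ (n + 1) * polyContent g) := by ring
        _ ≤ Ideal.span {f.coeff d} ^ i' * polyContent (f.erase d) ^ t *
              (polyContent f ^ n * polyContent (f * g)) := Ideal.mul_mono le_rfl hkey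
        _ ≤ polyContent f ^ i' * polyContent f ^ t *
              (polyContent f ^ n * polyContent (f * g)) :=
            Ideal.mul_mono
              (Ideal.mul_mono (Ideal.pow_right_mono hAle i') (Ideal.pow_right_mono hf1le t))
              le_rfl
        _ = polyContent f ^ (i' + t + n) * polyContent (f * g) := by ring
        _ = polyContent f ^ m * polyContent (f * g) := by rw [hexp]
    have hP : ∀ t i, i + t = m + 1 →
        Ideal.span {f.coeff d} ^ i * (polyContent (f.erase d) ^ t * polyContent g) ≤
          polyContent f ^ m * polyContent (f * g) := by
      intro t
      induction t with
      | zero => intro i hit; exact hcase1 i 0 hit (by omega)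
      | succ t' IHt =>
        intro i hit
        by_cases hin : n + 1 ≤ i
        · exact hcase1 i (t' + 1) hit hin
        · push_neg at hin
          have hstep : polyContent (f.erase d) ^ (t' + 1) * polyContent g ≤
              polyContent (f.erase d) ^ t' * polyContent (f.erase d * g) := by
            obtain ⟨u, rfl⟩ : ∃ u, t' = u + m₁ := ⟨t' - m₁, by omega⟩
            calc polyContent (f.erase d) ^ (u + m₁ + 1) * polyContent g
                = polyContent (f.erase d) ^ u *
                    (polyContent (f.erase d) ^ (m₁ + 1) * polyContent g) := by ring
              _ ≤ polyContent (f.erase d) ^ u *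
                    (polyContent (f.erase d) ^ m₁ * polyContent (f.erase d * g)) :=
                  Ideal.mul_mono le_rfl hm₁
              _ = polyContent (f.erase d) ^ (u + m₁) * polyContent (f.erase d * g) := by ring
          have hchain : polyContent (f.erase d) ^ (t' + 1) * polyContent g ≤
              polyContent (f.erase d) ^ t' * polyContent (f * g) +
                Ideal.span {f.coeff d} * (polyContent (f.erase d) ^ t' * polyContent g) := by
            refine le_trans hstep (le_trans (Ideal.mul_mono le_rfl hF2) ?_)
            rw [mul_add]
            refine add_le_add le_rfl (le_of_eq ?_)
            ring
          have hb1 : Ideal.span {f.coeff d} ^ i *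
              (polyContent (f.erase d) ^ t' * polyContent (f * g)) ≤
                polyContent f ^ m * polyContent (f * g) := by
            have hexp : i + t' = m := by omega
            calc Ideal.span {f.coeff d} ^ i *
                  (polyContent (f.erase d) ^ t' * polyContent (f * g))
                ≤ polyContent f ^ i * (polyContent f ^ t' * polyContent (f * g)) :=
                  Ideal.mul_mono (Ideal.pow_right_mono hAle i)
                    (Ideal.mul_mono (Ideal.pow_right_mono hf1le t') le_rfl)
              _ = polyContent f ^ (i + t') * polyContent (f * g) := by ring
              _ = polyContent f ^ m * polyContent (f * g) := by rw [hexp]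
          have hb2 := IHt (i + 1) (by omega)
          calc Ideal.span {f.coeff d} ^ i *
                (polyContent (f.erase d) ^ (t' + 1) * polyContent g)
              ≤ Ideal.span {f.coeff d} ^ i *
                  (polyContent (f.erase d) ^ t' * polyContent (f * g) +
                    Ideal.span {f.coeff d} *
                      (polyContent (f.erase d) ^ t' * polyContent g)) :=
                Ideal.mul_mono le_rfl hchain
            _ = Ideal.span {f.coeff d} ^ i *
                  (polyContent (f.erase d) ^ t' * polyContent (f * g)) +
                Ideal.span {f.coeff d} ^ (i + 1) *
                  (polyContent (f.erase d) ^ t' * polyContent g) := by ring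
            _ ≤ polyContent f ^ m * polyContent (f * g) := by
                rw [Submodule.add_eq_sup]
                exact sup_le hb1 hb2
    have h0 : polyContent f ^ (m + 1) * polyContent g ≤
        (Ideal.span {f.coeff d} + polyContent (f.erase d)) ^ (m + 1) * polyContent g :=
      Ideal.mul_mono (Ideal.pow_right_mono hfle (m + 1)) le_rfl
    refine le_trans h0 ?_
    have hfin := lemH (Ideal.span {f.coeff d}) (polyContent (f.erase d))
      (polyContent f ^ m * polyContent (f * g)) (m + 1) 0 (polyContent g)
      (fun i' t hit => hP t i' (by omega))
    simpa using hfin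

end DMaux

/-- If every ideal of the commutative semiring `S` is subtractive, then the
Dedekind–Mertens content formula holds in `S[X]`. -/
theorem dedekindMertens_of_subtractive {S : Type*} [CommSemiring S]
    (hsub : ∀ I : Ideal S, ∀ a b : S, a + b ∈ I → a ∈ I → b ∈ I) :
    ∀ f g : Polynomial S, ∃ m : ℕ,
      polyContent f ^ (m + 1) * polyContent g = polyContent f ^ m * polyContent (f * g) := by
  intro f g
  obtain ⟨m, hm⟩ := DMaux.mainle hsub (f.natDegree + 1) f
    (fun i hi => Polynomial.coeff_eq_zero_of_natDegree_lt (by omega)) g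
  refine ⟨m, le_antisymm hm ?_⟩
  calc polyContent f ^ m * polyContent (f * g)
      ≤ polyContent f ^ m * (polyContent f * polyContent g) :=
        Ideal.mul_mono le_rfl (DMaux.content_mul_le f g)
    _ = polyContent f ^ (m + 1) * polyContent g := by ring
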